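/- arXiv:0812.3334 — 2 statements merged into one kernel-verified Lean document; each statement's English description precedes it below -/
import Mathlib

section
/- Let M be a module with a filtration 0 = M₀ ⊂ M₁ ⊂ ⋯ ⊂ Mₙ = M such that each M_i/M_{i−1} is a 'standard' object Δ(μ_i). If Ext¹(Δ(μ), Δ(λ)) ≠ 0 implies λ > μ in a fixed partial order, then the filtration can be rearranged so that μ_i > μ_j implies i < j; i.e., there exists a Verma flag on M in which larger highest weights occur earlier. -/
/-- A Verma flag on the module `M`: a finite filtration
`0 = F 0 ⊆ F 1 ⊆ ⋯ ⊆ F n = M` whose successive subquotients are isomorphic to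
the standard objects `Δ (μ i)`. -/
structure VermaFlag (R : Type) [Ring R] {P : Type} [PartialOrder P]
    (Δ : P → Type) [∀ p, AddCommGroup (Δ p)] [∀ p, Module R (Δ p)]
    (M : Type) [AddCommGroup M] [Module R M] (n : ℕ) (μ : Fin n → P) where
  F : Fin (n + 1) → Submodule R M
  mono : Monotone F
  bot : F 0 = ⊥
  top : F (Fin.last n) = ⊤
  iso : ∀ i : Fin n,
    Nonempty ((F i.succ ⧸ Submodule.comap (F i.succ).subtype (F i.castSucc))
      ≃ₗ[R] Δ (μ i))

section Core
variable {R : Type} [Ring R] {M : Type} [AddCommGroup M] [Module R M]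
variable {Da Db : Type} [AddCommGroup Da] [Module R Da] [AddCommGroup Db] [Module R Db]

/-- Core swap lemma: given `A ≤ B ≤ C` with `B/A ≅ Da` and `C/B ≅ Db`, and a splitting
hypothesis for the extension `0 → Da → C/A → Db → 0`, there is `A ≤ B₂ ≤ C` with
`B₂/A ≅ Db` and `C/B₂ ≅ Da`. -/
theorem swap_core {A B C : Submodule R M} (hAB : A ≤ B) (hBC : B ≤ C)
    (ea : (B ⧸ Submodule.comap B.subtype A) ≃ₗ[R] Da)
    (eb : (C ⧸ Submodule.comap C.subtype B) ≃ₗ[R] Db)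
    (hext : ∀ (f : Da →ₗ[R] (C ⧸ Submodule.comap C.subtype A))
        (g : (C ⧸ Submodule.comap C.subtype A) →ₗ[R] Db),
        Function.Injective f → Function.Surjective g →
        LinearMap.range f = LinearMap.ker g →
        ∃ s : Db →ₗ[R] (C ⧸ Submodule.comap C.subtype A), g.comp s = LinearMap.id) :
    ∃ B₂ : Submodule R M, A ≤ B₂ ∧ B₂ ≤ C ∧
      Nonempty ((B₂ ⧸ Submodule.comap B₂.subtype A) ≃ₗ[R] Db) ∧
      Nonempty ((C ⧸ Submodule.comap C.subtype B₂) ≃ₗ[R] Da) := by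
  classical
  set E := C ⧸ Submodule.comap C.subtype A with hE
  let π : C →ₗ[R] E := (Submodule.comap C.subtype A).mkQ
  have hπsurj : Function.Surjective π := Submodule.Quotient.mk_surjective _
  -- the induced maps
  have hf0le : Submodule.comap B.subtype A ≤
      (Submodule.comap C.subtype A).comap (Submodule.inclusion hBC) := by
    intro b hb
    simpa [Submodule.mem_comap] using hb
  let f0 : (B ⧸ Submodule.comap B.subtype A) →ₗ[R] E :=
    Submodule.mapQ _ _ (Submodule.inclusion hBC) hf0le
  have hg0le : Submodule.comap C.subtype A ≤
      (Submodule.comap C.subtype B).comap (LinearMap.id (R := R)) := by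
    intro c hc; exact hAB hc
  let g0 : E →ₗ[R] (C ⧸ Submodule.comap C.subtype B) :=
    Submodule.mapQ _ _ LinearMap.id hg0le
  have hf0 : ∀ b : B, f0 (Submodule.Quotient.mk b) = Submodule.Quotient.mk (Submodule.inclusion hBC b) := by
    intro b
    exact Submodule.mapQ_apply _ _ _ b
  have hg0 : ∀ c : C, g0 (Submodule.Quotient.mk c) = Submodule.Quotient.mk c := by
    intro c
    exact Submodule.mapQ_apply _ _ _ c
  have hf0inj : Function.Injective f0 := by
    rw [← LinearMap.ker_eq_bot, eq_bot_iff]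
    intro x hx
    obtain ⟨b, rfl⟩ := Submodule.Quotient.mk_surjective _ x
    have : f0 (Submodule.Quotient.mk b) = 0 := hx
    rw [hf0, Submodule.Quotient.mk_eq_zero] at this
    rw [Submodule.mem_bot, Submodule.Quotient.mk_eq_zero]
    simpa [Submodule.mem_comap] using this
  have hg0surj : Function.Surjective g0 := by
    intro y
    obtain ⟨c, rfl⟩ := Submodule.Quotient.mk_surjective _ y
    exact ⟨Submodule.Quotient.mk c, hg0 c⟩
  have hrk : LinearMap.range f0 = LinearMap.ker g0 := by
    ext x
    constructor
    · rintro ⟨y, rfl⟩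
      obtain ⟨b, rfl⟩ := Submodule.Quotient.mk_surjective _ y
      rw [LinearMap.mem_ker, hf0, hg0, Submodule.Quotient.mk_eq_zero]
      simpa [Submodule.mem_comap] using b.2
    · intro hx
      obtain ⟨c, rfl⟩ := Submodule.Quotient.mk_surjective _ x
      rw [LinearMap.mem_ker, hg0, Submodule.Quotient.mk_eq_zero] at hx
      have hcB : (c : M) ∈ B := hx
      refine ⟨Submodule.Quotient.mk ⟨(c : M), hcB⟩, ?_⟩
      rw [hf0]
      congr 1
  -- the maps for hext
  let f' : Da →ₗ[R] E := f0 ∘ₗ ea.symm.toLinearMap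
  let g' : E →ₗ[R] Db := eb.toLinearMap ∘ₗ g0
  have hf'inj : Function.Injective f' := hf0inj.comp ea.symm.injective
  have hg'surj : Function.Surjective g' := eb.surjective.comp hg0surj
  have hrk' : LinearMap.range f' = LinearMap.ker g' := by
    rw [show f' = f0 ∘ₗ ea.symm.toLinearMap from rfl, LinearMap.range_comp,
      LinearEquiv.range, Submodule.map_top]
    rw [show g' = eb.toLinearMap ∘ₗ g0 from rfl, LinearMap.ker_comp]
    rw [show LinearMap.ker eb.toLinearMap = ⊥ from eb.ker]
    rw [Submodule.comap_bot]
    exact hrk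
  obtain ⟨s, hs⟩ := hext f' g' hf'inj hg'surj hrk'
  have hgs : ∀ d : Db, g' (s d) = d := fun d => congrArg (fun h => h d) (congrArg DFunLike.coe hs)
  have hsinj : Function.Injective s := by
    intro a b h
    have := congrArg g' h
    rwa [hgs, hgs] at this
  -- define B₂
  let N : Submodule R C := (LinearMap.range s).comap π
  let B₂ : Submodule R M := N.map C.subtype
  have hmemB₂ : ∀ x : M, x ∈ B₂ ↔ ∃ hx : x ∈ C, π ⟨x, hx⟩ ∈ LinearMap.range s := by
    intro x
    constructor
    · rintro ⟨y, hy, rfl⟩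
      exact ⟨y.2, hy⟩
    · rintro ⟨hx, h⟩
      exact ⟨⟨x, hx⟩, h, rfl⟩
  have hAB₂ : A ≤ B₂ := by
    intro x hx
    have hxC : x ∈ C := hBC (hAB hx)
    refine (hmemB₂ x).2 ⟨hxC, ?_⟩
    have : π ⟨x, hxC⟩ = 0 := by
      rw [show π ⟨x, hxC⟩ = Submodule.Quotient.mk ⟨x, hxC⟩ from rfl, Submodule.Quotient.mk_eq_zero]
      exact hx
    rw [this]; exact zero_mem _
  have hB₂C : B₂ ≤ C := Submodule.map_subtype_le _ _
  refine ⟨B₂, hAB₂, hB₂C, ?_, ?_⟩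
  · -- B₂ / A ≅ Db
    let φ : B₂ →ₗ[R] Db := g' ∘ₗ π ∘ₗ Submodule.inclusion hB₂C
    have hφ : ∀ x : B₂, φ x = g' (π (Submodule.inclusion hB₂C x)) := fun _ => rfl
    have hφsurj : Function.Surjective φ := by
      intro d
      obtain ⟨c, hc⟩ := hπsurj (s d)
      have hcB₂ : (c : M) ∈ B₂ := (hmemB₂ _).2 ⟨c.2, by rw [hc]; exact ⟨d, rfl⟩⟩
      refine ⟨⟨(c : M), hcB₂⟩, ?_⟩
      rw [hφ]
      have : Submodule.inclusion hB₂C (⟨(c : M), hcB₂⟩ : B₂) = c := by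
        apply Subtype.ext; rfl
      rw [this, hc, hgs]
    have hφker : LinearMap.ker φ = Submodule.comap B₂.subtype A := by
      ext x
      rw [LinearMap.mem_ker, hφ]
      obtain ⟨hxC, v, hv⟩ := (hmemB₂ (x : M)).1 x.2
      have hincl : Submodule.inclusion hB₂C x = ⟨(x : M), hxC⟩ := by apply Subtype.ext; rfl
      rw [hincl, ← hv]
      constructor
      · intro h
        rw [hgs] at h
        have : π ⟨(x : M), hxC⟩ = 0 := by rw [← hv, h, map_zero]
        rw [show π ⟨(x:M), hxC⟩ = Submodule.Quotient.mk ⟨(x:M), hxC⟩ from rfl,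
          Submodule.Quotient.mk_eq_zero] at this
        exact this
      · intro h
        have : π ⟨(x : M), hxC⟩ = 0 := by
          rw [show π ⟨(x:M), hxC⟩ = Submodule.Quotient.mk ⟨(x:M), hxC⟩ from rfl,
            Submodule.Quotient.mk_eq_zero]
          exact h
        rw [hv, this, map_zero]
    exact ⟨(Submodule.quotEquivOfEq _ _ hφker.symm).trans (φ.quotKerEquivOfSurjective hφsurj)⟩
  · -- C / B₂ ≅ Da
    let pE : E →ₗ[R] E := LinearMap.id - s ∘ₗ g'
    have hpE : ∀ v : E, pE v = v - s (g' v) := fun _ => rfl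
    have hpEg : ∀ v : E, g' (pE v) = 0 := by
      intro v; rw [hpE, map_sub, hgs, sub_self]
    have hpEzero : ∀ v : E, pE v = 0 ↔ v ∈ LinearMap.range s := by
      intro v
      rw [hpE, sub_eq_zero]
      constructor
      · intro h; exact ⟨g' v, h.symm⟩
      · rintro ⟨d, rfl⟩; rw [hgs]
    have hpEmem : ∀ v : E, pE v ∈ LinearMap.range f' := by
      intro v; rw [hrk']; exact hpEg v
    let ι := LinearEquiv.ofInjective f' hf'inj
    let ψ : C →ₗ[R] Da := ι.symm.toLinearMap ∘ₗ
      LinearMap.codRestrict (LinearMap.range f') (pE ∘ₗ π) (fun c => hpEmem (π c))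
    have hψ : ∀ c : C, (ι (ψ c) : E) = pE (π c) := by
      intro c
      have : ι (ψ c) = LinearMap.codRestrict (LinearMap.range f') (pE ∘ₗ π) (fun c => hpEmem (π c)) c := by
        show ι (ι.symm _) = _
        rw [LinearEquiv.apply_symm_apply]
      rw [this]; rfl
    have hψsurj : Function.Surjective ψ := by
      intro d
      obtain ⟨c, hc⟩ := hπsurj (f' d)
      refine ⟨c, ?_⟩
      apply ι.injective
      apply Subtype.ext
      rw [hψ, hc, hpE]
      have : g' (f' d) = 0 := by
        have : f' d ∈ LinearMap.ker g' := hrk' ▸ LinearMap.mem_range_self f' d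
        exact this
      rw [this, map_zero, sub_zero]
      have : (ι d : E) = f' d := rfl
      rw [this]
    have hψker : LinearMap.ker ψ = Submodule.comap C.subtype B₂ := by
      ext c
      rw [LinearMap.mem_ker]
      have heq : ψ c = 0 ↔ pE (π c) = 0 := by
        constructor
        · intro h
          have := hψ c
          rw [h, map_zero] at this
          simpa using this.symm
        · intro h
          apply ι.injective
          apply Subtype.ext
          rw [hψ, h, map_zero]
          rfl
      rw [heq, hpEzero]
      rw [Submodule.mem_comap]
      rw [hmemB₂]
      constructor
      · intro h; exact ⟨c.2, by convert h; rfl⟩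
      · rintro ⟨hx, h⟩; convert h; rfl
    exact ⟨(Submodule.quotEquivOfEq _ _ hψker.symm).trans (ψ.quotKerEquivOfSurjective hψsurj)⟩

end Core

section FlagSwap

/-- Swapping two adjacent subquotients in a Verma flag, given that the relevant
extension splits. -/
theorem flag_swap
    (R P : Type) [Ring R] [PartialOrder P] (Δ : P → Type)
    [∀ p, AddCommGroup (Δ p)] [∀ p, Module R (Δ p)]
    (hext : ∀ mu lam : P, ¬ mu < lam →
      ∀ (E : Type) [AddCommGroup E] [Module R E]
        (f : Δ lam →ₗ[R] E) (g : E →ₗ[R] Δ mu),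
        Function.Injective f → Function.Surjective g →
        LinearMap.range f = LinearMap.ker g →
        ∃ s : Δ mu →ₗ[R] E, g.comp s = LinearMap.id)
    (M : Type) [AddCommGroup M] [Module R M] (n : ℕ) (μ : Fin n → P)
    (flag : VermaFlag R Δ M n μ) (k : ℕ) (hk : k + 1 < n)
    (hlt : ¬ μ ⟨k + 1, hk⟩ < μ ⟨k, by omega⟩) :
    Nonempty (VermaFlag R Δ M n
      (μ ∘ Equiv.swap ⟨k, by omega⟩ ⟨k + 1, hk⟩)) := by
  classical
  set i0 : Fin n := ⟨k, by omega⟩ with hi0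
  set i1 : Fin n := ⟨k + 1, hk⟩ with hi1
  set A : Submodule R M := flag.F i0.castSucc with hA
  set B : Submodule R M := flag.F i0.succ with hB
  set C : Submodule R M := flag.F i1.succ with hC
  have hsc : i1.castSucc = i0.succ := by
    apply Fin.ext; simp [i0, i1]
  have hAB : A ≤ B := flag.mono (by simp [Fin.le_def, i0])
  have hBC : B ≤ C := flag.mono (by simp [Fin.le_def, i0, i1])
  have ea : Nonempty ((B ⧸ Submodule.comap B.subtype A) ≃ₗ[R] Δ (μ i0)) := flag.iso i0
  have eb : Nonempty ((C ⧸ Submodule.comap C.subtype B) ≃ₗ[R] Δ (μ i1)) := by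
    have := flag.iso i1
    rwa [hsc] at this
  obtain ⟨ea⟩ := ea; obtain ⟨eb⟩ := eb
  obtain ⟨B₂, hAB₂, hB₂C, ⟨e1⟩, ⟨e2⟩⟩ :=
    swap_core hAB hBC ea eb
      (fun f g hf hg hfg => hext (μ i1) (μ i0) hlt _ f g hf hg hfg)
  refine ⟨⟨fun j => if j.val = k + 1 then B₂ else flag.F j, ?_, ?_, ?_, ?_⟩⟩
  · -- monotone
    intro j j' hjj'
    have hjj'v : j.val ≤ j'.val := hjj'
    by_cases h1 : j.val = k + 1 <;> by_cases h2 : j'.val = k + 1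
    · simp [h1, h2]
    · simp only [h1, h2, if_true, if_false, if_pos, if_neg]
      calc B₂ ≤ C := hB₂C
        _ ≤ flag.F j' := flag.mono (by rw [Fin.le_def]; simp [i1]; omega)
    · simp only [h1, h2, if_true, if_false, if_pos, if_neg]
      calc flag.F j ≤ A := flag.mono (by rw [Fin.le_def]; simp [i0]; omega)
        _ ≤ B₂ := hAB₂
    · simp only [h1, h2, if_false, if_neg]
      exact flag.mono hjj'
  · -- bot
    rw [if_neg (by simp)]
    exact flag.bot
  · -- top
    simp only [Fin.val_last]
    rw [if_neg (by omega)]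
    exact flag.top
  · -- iso
    intro i
    by_cases h1 : i.val = k
    · have hi : i = i0 := Fin.ext h1
      have hsv : (Equiv.swap i0 i1) i = i1 := by rw [hi, Equiv.swap_apply_left]
      have e1' : i.succ.val = k + 1 := by simp [h1]
      have e2' : i.castSucc.val ≠ k + 1 := by simp [h1]
      simp only [Function.comp_apply]
      show Nonempty (_ ≃ₗ[R] Δ (μ ((Equiv.swap i0 i1) i)))
      rw [hsv, if_pos e1', if_neg e2']
      have : flag.F i.castSucc = A := by rw [hi]
      rw [this]
      exact ⟨e1⟩
    by_cases h2 : i.val = k + 1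
    · have hi : i = i1 := Fin.ext h2
      have hsv : (Equiv.swap i0 i1) i = i0 := by rw [hi, Equiv.swap_apply_right]
      have e1' : i.succ.val ≠ k + 1 := by simp [h2]
      have e2' : i.castSucc.val = k + 1 := by simp [h2]
      simp only [Function.comp_apply]
      show Nonempty (_ ≃ₗ[R] Δ (μ ((Equiv.swap i0 i1) i)))
      rw [hsv, if_neg e1', if_pos e2']
      have : flag.F i.succ = C := by rw [hi]
      rw [this]
      exact ⟨e2⟩
    · have hsv : (Equiv.swap i0 i1) i = i := by
        apply Equiv.swap_apply_of_ne_of_ne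
        · intro h; exact h1 (by rw [h])
        · intro h; exact h2 (by rw [h])
      have e1' : i.succ.val ≠ k + 1 := by simp; omega
      have e2' : i.castSucc.val ≠ k + 1 := by simp [h2]
      simp only [Function.comp_apply]
      show Nonempty (_ ≃ₗ[R] Δ (μ ((Equiv.swap i0 i1) i)))
      rw [hsv, if_neg e1', if_neg e2']
      exact flag.iso i

end FlagSwap

section Sorting

/-- Inversion count of a tuple with respect to the linear extension of the partial order. -/
noncomputable def invCount {P : Type} [PartialOrder P] (n : ℕ) (μ : Fin n → P) : ℕ :=
  (Finset.univ.filter (fun p : Fin n × Fin n => p.1 < p.2 ∧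
      toLinearExtension (μ p.1) < toLinearExtension (μ p.2))).card

theorem antitone_of_adjacent {α : Type} [Preorder α] {n : ℕ} (f : Fin n → α)
    (h : ∀ k (hk : k + 1 < n), f ⟨k + 1, hk⟩ ≤ f ⟨k, by omega⟩) :
    ∀ i j : Fin n, i ≤ j → f j ≤ f i := by
  have key : ∀ d (i j : Fin n), i.val + d = j.val → f j ≤ f i := by
    intro d
    induction d with
    | zero =>
      intro i j h0
      have : i = j := Fin.ext (by omega)
      rw [this]
    | succ d ih =>
      intro i j h0
      have hj' : i.val + d < n := by omega
      calc f j ≤ f ⟨i.val + d, hj'⟩ := by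
            have hle := h (i.val + d) (by omega)
            have hj : j = ⟨i.val + d + 1, by omega⟩ := Fin.ext (by simp; omega)
            rw [hj]; exact hle
        _ ≤ f i := ih i ⟨i.val + d, hj'⟩ rfl
  intro i j hij
  exact key (j.val - i.val) i j (by omega; )

theorem swap_measure_lt {P : Type} [PartialOrder P] (n : ℕ) (μ : Fin n → P)
    (k : ℕ) (hk : k + 1 < n)
    (hvio : toLinearExtension (μ ⟨k, by omega⟩) < toLinearExtension (μ ⟨k + 1, hk⟩)) :
    invCount n (μ ∘ Equiv.swap ⟨k, by omega⟩ ⟨k + 1, hk⟩) < invCount n μ := by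
  classical
  set i0 : Fin n := ⟨k, by omega⟩ with hi0
  set i1 : Fin n := ⟨k + 1, hk⟩ with hi1
  set sw : Equiv.Perm (Fin n) := Equiv.swap i0 i1 with hsw
  have hswv : ∀ x : Fin n,
      (sw x).val = if x.val = k then k + 1 else if x.val = k + 1 then k else x.val := by
    intro x
    rw [hsw, Equiv.swap_apply_def]
    by_cases h0 : x = i0
    · rw [if_pos h0, if_pos (by rw [h0])]
    · rw [if_neg h0]
      by_cases h1 : x = i1
      · rw [if_pos h1, if_neg (by rw [h1]; simp [i1]), if_pos (by rw [h1])]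
      · rw [if_neg h1, if_neg (fun hc => h0 (Fin.ext hc)), if_neg (fun hc => h1 (Fin.ext hc))]
  set S : Finset (Fin n × Fin n) := Finset.univ.filter (fun p : Fin n × Fin n =>
    p.1 < p.2 ∧ toLinearExtension (μ p.1) < toLinearExtension (μ p.2)) with hS
  set S' : Finset (Fin n × Fin n) := Finset.univ.filter (fun p : Fin n × Fin n =>
    p.1 < p.2 ∧ toLinearExtension (μ (sw p.1)) < toLinearExtension (μ (sw p.2))) with hS'
  have hgoal : invCount n (μ ∘ sw) = S'.card := rfl
  have hgoal2 : invCount n μ = S.card := rfl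
  rw [hgoal, hgoal2]
  let Φ : Fin n × Fin n → Fin n × Fin n := fun p => (sw p.1, sw p.2)
  have hΦinj : Function.Injective Φ := by
    intro p q h
    have h1 : sw p.1 = sw q.1 := congrArg Prod.fst h
    have h2 : sw p.2 = sw q.2 := congrArg Prod.snd h
    exact Prod.ext (sw.injective h1) (sw.injective h2)
  have hsub : S'.image Φ ⊆ S.erase (i0, i1) := by
    intro p hp
    obtain ⟨q, hq, rfl⟩ := Finset.mem_image.1 hp
    rw [hS', Finset.mem_filter] at hq
    obtain ⟨-, hq1, hq2⟩ := hq
    have hq1v : q.1.val < q.2.val := hq1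
    -- exclude the case q = (i0, i1)
    have hnot : ¬ (q.1.val = k ∧ q.2.val = k + 1) := by
      rintro ⟨ha, hb⟩
      have hq1' : q.1 = i0 := Fin.ext ha
      have hq2' : q.2 = i1 := Fin.ext hb
      rw [hq1', hq2', Equiv.swap_apply_left, Equiv.swap_apply_right] at hq2
      exact absurd hq2 (lt_asymm hvio)
    have hlt' : (sw q.1).val < (sw q.2).val := by
      rw [hswv q.1, hswv q.2]
      split_ifs <;> omega
    rw [Finset.mem_erase]
    constructor
    · intro hc
      have h1 : sw q.1 = i0 := congrArg Prod.fst hc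
      have h2 : sw q.2 = i1 := congrArg Prod.snd hc
      have hq1i : q.1 = i1 := by
        have := congrArg sw h1
        rwa [hsw, Equiv.swap_apply_self, Equiv.swap_apply_left] at this
      have hq2i : q.2 = i0 := by
        have := congrArg sw h2
        rwa [hsw, Equiv.swap_apply_self, Equiv.swap_apply_right] at this
      rw [hq1i, hq2i] at hq1v
      simp [i0, i1] at hq1v
    · rw [hS, Finset.mem_filter]
      exact ⟨Finset.mem_univ _, hlt', hq2⟩
  have hmem : (i0, i1) ∈ S := by
    rw [hS, Finset.mem_filter]
    refine ⟨Finset.mem_univ _, ?_, hvio⟩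
    show i0.val < i1.val
    simp [i0, i1]
  calc S'.card = (S'.image Φ).card := (Finset.card_image_of_injective _ hΦinj).symm
    _ ≤ (S.erase (i0, i1)).card := Finset.card_le_card hsub
    _ < S.card := Finset.card_erase_lt_of_mem hmem

end Sorting

theorem main_aux
    (R P : Type) [Ring R] [PartialOrder P] (Δ : P → Type)
    [∀ p, AddCommGroup (Δ p)] [∀ p, Module R (Δ p)]
    (hext : ∀ mu lam : P, ¬ mu < lam →
      ∀ (E : Type) [AddCommGroup E] [Module R E]
        (f : Δ lam →ₗ[R] E) (g : E →ₗ[R] Δ mu),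
        Function.Injective f → Function.Surjective g →
        LinearMap.range f = LinearMap.ker g →
        ∃ s : Δ mu →ₗ[R] E, g.comp s = LinearMap.id)
    (M : Type) [AddCommGroup M] [Module R M] (n : ℕ) :
    ∀ m : ℕ, ∀ μ : Fin n → P, VermaFlag R Δ M n μ → invCount n μ ≤ m →
      ∃ σ : Equiv.Perm (Fin n),
        (∀ i j : Fin n, i ≤ j →
          toLinearExtension (μ (σ j)) ≤ toLinearExtension (μ (σ i))) ∧
        Nonempty (VermaFlag R Δ M n (μ ∘ σ)) := by
  intro m
  induction m with
  | zero =>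
    intro μ flag hm
    refine ⟨Equiv.refl _, ?_, ⟨flag⟩⟩
    intro i j hij
    rcases eq_or_lt_of_le hij with h | h
    · rw [h]
    · simp only [Equiv.refl_apply]
      by_contra hc
      push_neg at hc
      have : (i, j) ∈ (Finset.univ.filter (fun p : Fin n × Fin n => p.1 < p.2 ∧
          toLinearExtension (μ p.1) < toLinearExtension (μ p.2))) := by
        rw [Finset.mem_filter]; exact ⟨Finset.mem_univ _, h, hc⟩
      have : 0 < invCount n μ := Finset.card_pos.2 ⟨(i, j), this⟩
      omega
  | succ m ih =>
    intro μ flag hm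
    by_cases hadj : ∀ k (hk : k + 1 < n),
        toLinearExtension (μ ⟨k + 1, hk⟩) ≤ toLinearExtension (μ ⟨k, by omega⟩)
    · refine ⟨Equiv.refl _, ?_, ⟨flag⟩⟩
      intro i j hij
      simp only [Equiv.refl_apply]
      exact antitone_of_adjacent (fun x => toLinearExtension (μ x)) hadj i j hij
    · push_neg at hadj
      obtain ⟨k, hk, hvio⟩ := hadj
      have hlt' : ¬ μ ⟨k + 1, hk⟩ < μ ⟨k, by omega⟩ := by
        intro hc
        have : toLinearExtension (μ ⟨k + 1, hk⟩) < toLinearExtension (μ ⟨k, by omega⟩) :=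
          (toLinearExtension.monotone hc.le).lt_of_ne (fun he => hc.ne (by exact he))
        exact absurd this (lt_asymm hvio)
      obtain ⟨flag'⟩ := flag_swap R P Δ hext M n μ flag k hk hlt'
      have hdec := swap_measure_lt n μ k hk hvio
      obtain ⟨σ', hanti, hflag⟩ :=
        ih (μ ∘ Equiv.swap ⟨k, by omega⟩ ⟨k + 1, hk⟩) flag' (by omega)
      refine ⟨σ'.trans (Equiv.swap ⟨k, by omega⟩ ⟨k + 1, hk⟩), ?_, ?_⟩
      · intro i j hij
        exact hanti i j hij
      · exact hflag


/-- if `Ext¹(Δ(μ), Δ(λ)) ≠ 0` implies `λ > μ` (formulated as: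
every extension `0 → Δ(λ) → E → Δ(μ) → 0` splits unless `λ > μ`), then any
Verma flag of `M` can be rearranged so that larger highest weights occur
earlier: there is a permutation `σ` of the indices such that
`μ(σ i) > μ(σ j)` implies `i < j` and `M` has a Verma flag with subquotients
`Δ(μ(σ 0)), …, Δ(μ(σ (n−1)))` in this order. -/
theorem verma_flag_reorder
    (R P : Type) [Ring R] [PartialOrder P] (Δ : P → Type)
    [∀ p, AddCommGroup (Δ p)] [∀ p, Module R (Δ p)]
    (hext : ∀ mu lam : P, ¬ mu < lam →
      ∀ (E : Type) [AddCommGroup E] [Module R E]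
        (f : Δ lam →ₗ[R] E) (g : E →ₗ[R] Δ mu),
        Function.Injective f → Function.Surjective g →
        LinearMap.range f = LinearMap.ker g →
        ∃ s : Δ mu →ₗ[R] E, g.comp s = LinearMap.id)
    (M : Type) [AddCommGroup M] [Module R M] (n : ℕ) (μ : Fin n → P)
    (flag : VermaFlag R Δ M n μ) :
    ∃ σ : Equiv.Perm (Fin n),
      (∀ i j : Fin n, μ (σ j) < μ (σ i) → i < j) ∧
      Nonempty (VermaFlag R Δ M n (μ ∘ σ)) := by
  obtain ⟨σ, hanti, hflag⟩ :=
    main_aux R P Δ hext M n (invCount n μ) μ flag le_rfl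
  refine ⟨σ, ?_, hflag⟩
  intro i j hlt
  by_contra hc
  push_neg at hc
  have h1 : toLinearExtension (μ (σ j)) < toLinearExtension (μ (σ i)) :=
    (toLinearExtension.monotone hlt.le).lt_of_ne (fun he => hlt.ne (by exact he))
  have h2 : toLinearExtension (μ (σ i)) ≤ toLinearExtension (μ (σ j)) := hanti j i hc
  exact absurd h1 (not_lt.2 h2)
end

section
/- Suppose P is an object with a two-step filtration 0 → Δ(μ) → P → Δ(λ) → 0 and C is an endomorphism of P acting on Δ(λ) by scalar c and nonzero as C − c·id on P (with image of C − c·id contained in Δ(μ)). If 0 → Δ(μ) → M → X → 0 is exact, X is a quotient of Δ(λ) (a highest weight module of highest weight λ), C acts on M as the scalar c, and f: P → M is a map with surjective composite P → M → X, then Δ(μ) ⊂ P lies in the kernel of f, provided every nonzero endomorphism of Δ(μ) is injective. -/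
/-- abstract Casimir argument, Lemma 5.6: given exact sequences
`0 → Δ(μ) →ι P →π Δ(λ) → 0` and `0 → Δ(μ) →ιM M →πM X → 0`, where `X` is a
quotient of `Δ(λ)` via `q` with commuting square `πM ∘ f = q ∘ π`, a Casimir
operator `Cas` on `P` with `Cas − c·id ≠ 0` and image contained in `Δ(μ) = im ι`,
such that `Cas` acts on `M` as the scalar `c` (so `f ∘ Cas = c·f`), `f` maps the
copy of `Δ(μ)` in `P` into the copy of `Δ(μ)` in `M`, the composite
`P → M → X` is surjective, and every nonzero endomorphism of `Δ(μ)` is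
injective — then `Δ(μ) ⊆ P` lies in the kernel of `f`. -/
theorem casimir_kernel_argument
    (R : Type) [CommRing R]
    (Dmu Dlam P M X : Type)
    [AddCommGroup Dmu] [Module R Dmu] [AddCommGroup Dlam] [Module R Dlam]
    [AddCommGroup P] [Module R P] [AddCommGroup M] [Module R M]
    [AddCommGroup X] [Module R X]
    (ι : Dmu →ₗ[R] P) (π : P →ₗ[R] Dlam)
    (hι : Function.Injective ι) (hπ : Function.Surjective π)
    (hex : LinearMap.range ι = LinearMap.ker π)
    (ιM : Dmu →ₗ[R] M) (πM : M →ₗ[R] X)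
    (hιM : Function.Injective ιM) (hπM : Function.Surjective πM)
    (hexM : LinearMap.range ιM = LinearMap.ker πM)
    (q : Dlam →ₗ[R] X) (hq : Function.Surjective q)
    (c : R) (Cas : P →ₗ[R] P)
    (hCrange : LinearMap.range (Cas - c • LinearMap.id) ≤ LinearMap.range ι)
    (hCne : Cas - c • LinearMap.id ≠ 0)
    (f : P →ₗ[R] M)
    (hsquare : πM.comp f = q.comp π)
    (hfC : f.comp Cas = c • f)
    (hfD : ∀ u : Dmu, ∃ v : Dmu, f (ι u) = ιM v)
    (hend : ∀ g : Dmu →ₗ[R] Dmu, g ≠ 0 → Function.Injective g)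
    (hsurj : Function.Surjective (πM.comp f)) :
    ∀ u : Dmu, f (ι u) = 0 := by
  by_contra hcon
  push_neg at hcon
  obtain ⟨u₀, hu₀⟩ := hcon
  have hrange : ∀ u, f (ι u) ∈ LinearMap.range ιM := by
    intro u
    obtain ⟨v, hv⟩ := hfD u
    exact ⟨v, hv.symm⟩
  let e := LinearEquiv.ofInjective ιM hιM
  let h : Dmu →ₗ[R] Dmu :=
    e.symm.toLinearMap.comp ((f.comp ι).codRestrict (LinearMap.range ιM) hrange)
  have hh : ∀ u, ιM (h u) = f (ι u) := by
    intro u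
    have : (e (h u) : M) = f (ι u) := by
      simp [h, e, LinearEquiv.apply_symm_apply]
    simpa [e, LinearEquiv.ofInjective_apply] using this
  have hne : h ≠ 0 := by
    intro h0
    apply hu₀
    have := hh u₀
    rw [h0] at this
    simpa using this.symm
  have hinj := hend h hne
  have hfD0 : ∀ p : P, f ((Cas - c • (LinearMap.id : P →ₗ[R] P)) p) = 0 := by
    intro p
    have := LinearMap.congr_fun hfC p
    simp only [LinearMap.comp_apply, LinearMap.smul_apply] at this
    simp [LinearMap.sub_apply, map_sub, this]
  apply hCne
  ext p
  obtain ⟨w, hw⟩ := hCrange (LinearMap.mem_range_self _ p)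
  have h0 : ιM (h w) = 0 := by rw [hh, hw]; exact hfD0 p
  have hw0 : w = 0 := hinj (hιM (by simpa using h0))
  simp [← hw, hw0]
end
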